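/- Let R be a finite digraph. Then for every finite digraph S: R ⊑_Γ S with respect to the class of all finite digraphs if and only if #S(G,R) ≤ #S(G,S) for every finite digraph G. -/

import Mathlib

/-- A homomorphism between digraphs `(V, A)` and `(W, B)`:
a map sending every arc to an arc. -/
def IsHom {V W : Type} (A : V → V → Prop) (B : W → W → Prop) (f : V → W) : Prop :=
  ∀ ⦃v w : V⦄, A v w → B (f v) (f w)

/-- A strict homomorphism: a homomorphism mapping proper arcs to proper arcs. -/
def IsStrictHom {V W : Type} (A : V → V → Prop) (B : W → W → Prop) (f : V → W) : Prop :=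
  IsHom A B f ∧ ∀ ⦃v w : V⦄, A v w → v ≠ w → f v ≠ f w

/-- Adjacency in a digraph. -/
def DAdj {V : Type} (A : V → V → Prop) (v w : V) : Prop := A v w ∨ A w v

/-- `v` and `w` are connected in `X`: `v = w` (with `v ∈ X`), or there is a line
`z 0, …, z I` inside `X` connecting them, consecutive members being adjacent. -/
def ConnIn {V : Type} (A : V → V → Prop) (X : Set V) (v w : V) : Prop :=
  ∃ (I : ℕ) (z : ℕ → V), z 0 = v ∧ z I = w ∧ (∀ i ≤ I, z i ∈ X) ∧
    ∀ i < I, DAdj A (z i) (z (i + 1))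

/-- `γ_X(v)`: the set of `w ∈ X` connected with `v` in `X`. -/
def gammaSet {V : Type} (A : V → V → Prop) (X : Set V) (v : V) : Set V :=
  {w | ConnIn A X v w}

/-- `Γ_ξ(v)`: the connectivity component of `v` in the preimage `ξ⁻¹(ξ(v))`. -/
def GammaComp {V W : Type} (A : V → V → Prop) (ξ : V → W) (v : V) : Set V :=
  gammaSet A {u | ξ u = ξ v} v

/-- The set of homomorphisms `H(G,H)` (as a type). -/
def HomSet {V W : Type} (A : V → V → Prop) (B : W → W → Prop) : Type :=
  {f : V → W // IsHom A B f}

/-- The set of strict homomorphisms `S(G,H)` (as a type). -/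
def StrictHomSet {V W : Type} (A : V → V → Prop) (B : W → W → Prop) : Type :=
  {f : V → W // IsStrictHom A B f}

/-- The vertex set of the digraph `G_ξ`: the components `Γ_ξ(v)`, `v ∈ V(G)`. -/
def GVert {V W : Type} (A : V → V → Prop) (ξ : V → W) : Type :=
  {C : Set V // ∃ v, C = GammaComp A ξ v}

/-- The arc relation of the digraph `G_ξ`. -/
def GArc {V W : Type} (A : V → V → Prop) (ξ : V → W) :
    GVert A ξ → GVert A ξ → Prop :=
  fun C D => ∃ a ∈ C.1, ∃ b ∈ D.1, A a b

/-- The canonical map `π_ξ : G → G_ξ`, `v ↦ Γ_ξ(v)`. -/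
def piMap {V W : Type} (A : V → V → Prop) (ξ : V → W) (v : V) : GVert A ξ :=
  ⟨GammaComp A ξ v, v, rfl⟩

/-- `Θ_{G,H'}(ξ)`: the homomorphisms `ζ : G → H'` with `G_ζ = G_ξ`
(equality of the digraphs `G_ζ` and `G_ξ`, i.e. of their vertex sets,
which determines the arc sets). -/
def ThetaSet {V W W' : Type} (A : V → V → Prop) (B' : W' → W' → Prop)
    (ξ : V → W) : Set (V → W') :=
  {ζ | IsHom A B' ζ ∧
    {C : Set V | ∃ v, C = GammaComp A ζ v} = {C : Set V | ∃ v, C = GammaComp A ξ v}}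

/-- `R ⊑_Γ S` with respect to a class `D'` of finite digraphs: a strong Γ-scheme
from `R` to `S` exists, i.e. for every finite digraph `G ∈ D'` an injective map
`ρ_G : H(G,R) → H(G,S)` with `Γ_{ρ_G(ξ)}(v) = Γ_ξ(v)` for all `ξ`, `v`. -/
def SqGamma (D' : (V : Type) → (V → V → Prop) → Prop)
    {VR VS : Type} (R : VR → VR → Prop) (S : VS → VS → Prop) : Prop :=
  ∀ (V : Type) [Finite V] [Nonempty V] (A : V → V → Prop), D' V A →
    ∃ ρ : HomSet A R → HomSet A S, Function.Injective ρ ∧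
      ∀ (ξ : HomSet A R) (v : V), GammaComp A (ρ ξ).1 v = GammaComp A ξ.1 v

/-- The class `T_a`: digraphs whose loop-removed digraph is acyclic,
i.e. every closed walk is trivial. -/
def Ta {V : Type} (A : V → V → Prop) : Prop :=
  ∀ (z : ℕ → V) (I : ℕ), 0 < I →
    (∀ i < I, A (z i) (z (i + 1)) ∧ z i ≠ z (i + 1)) → z 0 ≠ z I

/-- A poset: a reflexive, antisymmetric, transitive digraph. -/
def IsPosetRel {V : Type} (A : V → V → Prop) : Prop :=
  Reflexive A ∧ AntiSymmetric A ∧ Transitive A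

/-- An element of `P^*`: an irreflexive, antisymmetric, transitive digraph. -/
def IsStrictPosetRel {V : Type} (A : V → V → Prop) : Prop :=
  Irreflexive A ∧ AntiSymmetric A ∧ Transitive A

/-- The direct (disjoint) sum of two digraphs. -/
def sumRel {V W : Type} (A : V → V → Prop) (B : W → W → Prop) :
    V ⊕ W → V ⊕ W → Prop
  | Sum.inl v, Sum.inl w => A v w
  | Sum.inr v, Sum.inr w => B v w
  | _, _ => False

/-- The open neighborhood `N(v)`. -/
def Nbr {Z : Type} (A : Z → Z → Prop) (v : Z) : Set Z :=
  {w | w ≠ v ∧ (A v w ∨ A w v)}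

/-- The in-neighborhood `N^in(v)`. -/
def NIn {Z : Type} (A : Z → Z → Prop) (v : Z) : Set Z :=
  {w | w ≠ v ∧ A w v}

/-- The out-neighborhood `N^out(v)`. -/
def NOut {Z : Type} (A : Z → Z → Prop) (v : Z) : Set Z :=
  {w | w ≠ v ∧ A v w}

/-- `A_r`: the arcs of `R` minus all arcs between `M` and `X`. -/
def ArRel {Z : Type} (A : Z → Z → Prop) (X M : Set Z) : Z → Z → Prop :=
  fun v w => A v w ∧ ¬(v ∈ M ∧ w ∈ X) ∧ ¬(v ∈ X ∧ w ∈ M)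

/-- `A_d = { m β(x) : m x ∈ A(R) ∩ (M × X) }`. -/
def AdRel {Z : Type} (A : Z → Z → Prop) (X M : Set Z) (β : Z → Z) : Z → Z → Prop :=
  fun v w => v ∈ M ∧ ∃ x ∈ X, A v x ∧ w = β x

/-- `A_u = { β(x) m : x m ∈ A(R) ∩ (X × M) }`. -/
def AuRel {Z : Type} (A : Z → Z → Prop) (X M : Set Z) (β : Z → Z) : Z → Z → Prop :=
  fun v w => w ∈ M ∧ ∃ x ∈ X, A x w ∧ v = β x

/-- The rearranged digraph `S`, with `A(S) = A_r ∪ A_d ∪ A_u`. -/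
def SRel {Z : Type} (A : Z → Z → Prop) (X M : Set Z) (β : Z → Z) : Z → Z → Prop :=
  fun v w => ArRel A X M v w ∨ AdRel A X M β v w ∨ AuRel A X M β v w

/-- `U_ξ = { v : ξ(v) ∈ T and ξ[N_G(v)] ∩ M ≠ ∅ }` (for `T = X`; with `T = Y`
this gives `U'_ζ`). -/
def USet {V Z : Type} (AG : V → V → Prop) (T M : Set Z) (ξ : V → Z) : Set V :=
  {v | ξ v ∈ T ∧ ∃ w ∈ Nbr AG v, ξ w ∈ M}

open Classical in
/-- The rearranged homomorphism `ρ_G(ξ)`: `β(ξ(v))` on `U_ξ` and `ξ(v)` elsewhere. -/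
noncomputable def rhoMap {V Z : Type} (AG : V → V → Prop) (X M : Set Z) (β : Z → Z)
    (ξ : V → Z) : V → Z :=
  fun v => if v ∈ USet AG X M ξ then β (ξ v) else ξ v

section AuxConn

variable {V VR VS : Type}

/-- The single-step relation used to characterize `ConnIn`. -/
def stepRel (A : V → V → Prop) (X : Set V) : V → V → Prop :=
  fun a b => a ∈ X ∧ b ∈ X ∧ DAdj A a b

theorem stepRel_symm {A : V → V → Prop} {X : Set V} : Symmetric (stepRel A X) :=
  fun _ _ h => ⟨h.2.1, h.1, h.2.2.symm⟩

theorem connIn_iff {A : V → V → Prop} {X : Set V} {v w : V} :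
    ConnIn A X v w ↔ v ∈ X ∧ w ∈ X ∧ Relation.ReflTransGen (stepRel A X) v w := by
  constructor
  · rintro ⟨I, z, rfl, rfl, hmem, hstep⟩
    refine ⟨hmem 0 (Nat.zero_le _), hmem I le_rfl, ?_⟩
    have key : ∀ J, J ≤ I → Relation.ReflTransGen (stepRel A X) (z 0) (z J) := by
      intro J
      induction J with
      | zero => intro _; exact .refl
      | succ n ih =>
        intro h
        exact (ih (Nat.le_of_succ_le h)).tail
          ⟨hmem n (Nat.le_of_succ_le h), hmem (n + 1) h, hstep n (Nat.lt_of_succ_le h)⟩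
    exact key I le_rfl
  · rintro ⟨hv, -, hrt⟩
    induction hrt with
    | refl =>
      exact ⟨0, fun _ => v, rfl, rfl, fun _ _ => hv, fun i h => absurd h (Nat.not_lt_zero i)⟩
    | @tail b c hab hbc ih =>
      obtain ⟨I, z, h0, hI, hm, hs⟩ := ih
      refine ⟨I + 1, fun i => if i ≤ I then z i else c, ?_, ?_, ?_, ?_⟩
      · simp [h0]
      · simp
      · intro i hi
        by_cases h : i ≤ I
        · simpa [h] using hm i h
        · simpa [h] using hbc.2.1
      · intro i hi
        by_cases h : i < I
        · have h1 : i ≤ I := le_of_lt h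
          have h2 : i + 1 ≤ I := h
          simpa [h1, h2] using hs i h
        · have hiI : i = I := by omega
          have h3 : ¬ I + 1 ≤ I := by omega
          simpa [hiI, h3, hI] using hbc.2.2

theorem connIn_refl {A : V → V → Prop} {X : Set V} {v : V} (hv : v ∈ X) : ConnIn A X v v :=
  ⟨0, fun _ => v, rfl, rfl, fun _ _ => hv, fun i h => absurd h (Nat.not_lt_zero i)⟩

theorem ConnIn.symm {A : V → V → Prop} {X : Set V} {v w : V}
    (h : ConnIn A X v w) : ConnIn A X w v := by
  rcases connIn_iff.mp h with ⟨hv, hw, hrt⟩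
  exact connIn_iff.mpr ⟨hw, hv, (@Relation.ReflTransGen.stdSymm _ _ ⟨stepRel_symm⟩).symm _ _ hrt⟩

theorem ConnIn.trans {A : V → V → Prop} {X : Set V} {v w u : V}
    (h1 : ConnIn A X v w) (h2 : ConnIn A X w u) : ConnIn A X v u := by
  rcases connIn_iff.mp h1 with ⟨hv, -, r1⟩
  rcases connIn_iff.mp h2 with ⟨-, hu, r2⟩
  exact connIn_iff.mpr ⟨hv, hu, r1.trans r2⟩

theorem connIn_single {A : V → V → Prop} {X : Set V} {v w : V}
    (hv : v ∈ X) (hw : w ∈ X) (h : DAdj A v w) : ConnIn A X v w :=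
  connIn_iff.mpr ⟨hv, hw, Relation.ReflTransGen.single ⟨hv, hw, h⟩⟩

theorem mem_gammaComp_self (A : V → V → Prop) (ξ : V → VR) (v : V) :
    v ∈ GammaComp A ξ v := connIn_refl rfl

theorem gammaComp_mem_fiber {A : V → V → Prop} {ξ : V → VR} {v w : V}
    (h : w ∈ GammaComp A ξ v) : ξ w = ξ v := (connIn_iff.mp h).2.1

theorem gammaComp_eq_of_mem {A : V → V → Prop} {ξ : V → VR} {v w : V}
    (h : w ∈ GammaComp A ξ v) : GammaComp A ξ w = GammaComp A ξ v := by
  have hf : ξ w = ξ v := gammaComp_mem_fiber h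
  have hfib : {u : V | ξ u = ξ w} = {u : V | ξ u = ξ v} := by ext u; simp [hf]
  have h' : ConnIn A {u : V | ξ u = ξ v} v w := h
  show gammaSet A {u : V | ξ u = ξ w} w = gammaSet A {u : V | ξ u = ξ v} v
  rw [hfib]
  ext u
  exact ⟨fun hu => h'.trans hu, fun hu => h'.symm.trans hu⟩

theorem gammaComp_eq_singleton {A : V → V → Prop} {B : VR → VR → Prop} {ξ : V → VR}
    (hξ : IsStrictHom A B ξ) (v : V) : GammaComp A ξ v = {v} := by
  apply Set.eq_singleton_iff_unique_mem.mpr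
  refine ⟨mem_gammaComp_self A ξ v, ?_⟩
  intro w hw
  rcases connIn_iff.mp hw with ⟨-, -, hrt⟩
  clear hw
  induction hrt with
  | refl => rfl
  | @tail b c hab hbc ih =>
    rcases hbc with ⟨hb, hc, hadj⟩
    by_cases hbc' : b = c
    · rw [← hbc']; exact ih
    · exfalso
      rcases hadj with h1 | h1
      · exact hξ.2 h1 hbc' (hb.trans hc.symm)
      · exact hξ.2 h1 (Ne.symm hbc') (hc.trans hb.symm)

theorem isStrictHom_of_gammaComp {A : V → V → Prop} {B : VS → VS → Prop} {ζ : V → VS}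
    (hhom : IsHom A B ζ) (h : ∀ v, GammaComp A ζ v = {v}) : IsStrictHom A B ζ := by
  refine ⟨hhom, fun v w hvw hne hEq => ?_⟩
  have hw : w ∈ GammaComp A ζ v := connIn_single rfl hEq.symm (Or.inl hvw)
  rw [h v] at hw
  exact hne hw.symm

end AuxConn

section AuxQuot

variable {V VR VS : Type}

/-- The set of components of a homomorphism. -/
def Comps (A : V → V → Prop) (ξ : V → VR) : Set (Set V) :=
  {C | ∃ v, C = GammaComp A ξ v}

/-- The quotient arc relation on `Set V` for a set `𝒞` of components. -/
def qArc (A : V → V → Prop) (𝒞 : Set (Set V)) : Set V → Set V → Prop :=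
  fun C D => C ∈ 𝒞 ∧ D ∈ 𝒞 ∧ ∃ a ∈ C, ∃ b ∈ D, A a b

open Classical in
/-- The induced map on components. -/
noncomputable def barMap [Nonempty VR] (A : V → V → Prop) (ξ : V → VR) : Set V → VR :=
  fun C => if h : ∃ v, C = GammaComp A ξ v then ξ h.choose else Classical.arbitrary VR

theorem barMap_eq [Nonempty VR] {A : V → V → Prop} {ξ : V → VR} {C : Set V}
    (hC : C ∈ Comps A ξ) {a : V} (ha : a ∈ C) : barMap A ξ C = ξ a := by
  have hC' : ∃ v, C = GammaComp A ξ v := hC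
  rw [barMap, dif_pos hC']
  have hspec := hC'.choose_spec
  rw [hspec] at ha
  exact (gammaComp_mem_fiber ha).symm

theorem barMap_pi [Nonempty VR] {A : V → V → Prop} {ξ : V → VR} (v : V) :
    barMap A ξ (GammaComp A ξ v) = ξ v :=
  barMap_eq ⟨v, rfl⟩ (mem_gammaComp_self A ξ v)

theorem barMap_off [Nonempty VR] {A : V → V → Prop} {ξ : V → VR} {C : Set V}
    (hC : C ∉ Comps A ξ) : barMap A ξ C = Classical.arbitrary VR := by
  have hC' : ¬ ∃ v, C = GammaComp A ξ v := hC
  rw [barMap, dif_neg hC']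

theorem barMap_strict [Nonempty VR] {A : V → V → Prop} {R : VR → VR → Prop} {ξ : V → VR}
    (hξ : IsHom A R ξ) : IsStrictHom (qArc A (Comps A ξ)) R (barMap A ξ) := by
  constructor
  · rintro C D ⟨hC, hD, a, ha, b, hb, hab⟩
    rw [barMap_eq hC ha, barMap_eq hD hb]
    exact hξ hab
  · rintro C D ⟨hC, hD, a, ha, b, hb, hab⟩ hne hEq
    apply hne
    rw [barMap_eq hC ha, barMap_eq hD hb] at hEq
    have hba : b ∈ GammaComp A ξ a := connIn_single rfl hEq.symm (Or.inl hab)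
    obtain ⟨vc, hvc⟩ := hC
    obtain ⟨vd, hvd⟩ := hD
    have h1 : GammaComp A ξ a = C := by
      rw [hvc] at ha ⊢; exact gammaComp_eq_of_mem ha
    have h2 : GammaComp A ξ b = D := by
      rw [hvd] at hb ⊢; exact gammaComp_eq_of_mem hb
    rw [← h1, ← h2, gammaComp_eq_of_mem hba]

theorem gammaComp_comp {A : V → V → Prop} {SB : VS → VS → Prop} {ξ : V → VR} {ζ : Set V → VS}
    (hζ : IsStrictHom (qArc A (Comps A ξ)) SB ζ) (v : V) :
    GammaComp A (fun u => ζ (GammaComp A ξ u)) v = GammaComp A ξ v := by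
  ext w
  constructor
  · intro hw
    rcases connIn_iff.mp hw with ⟨-, -, hrt⟩
    clear hw
    induction hrt with
    | refl => exact mem_gammaComp_self A ξ v
    | @tail b c hab hbc ih =>
      rcases hbc with ⟨hb2, hc2, hadj⟩
      have hπb : GammaComp A ξ b = GammaComp A ξ v := gammaComp_eq_of_mem ih
      by_cases hcb : GammaComp A ξ c = GammaComp A ξ b
      · have hcmem : c ∈ GammaComp A ξ b := hcb ▸ mem_gammaComp_self A ξ c
        exact hπb ▸ hcmem
      · exfalso
        have hζbc : ζ (GammaComp A ξ b) = ζ (GammaComp A ξ c) := by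
          have hb2' : ζ (GammaComp A ξ b) = ζ (GammaComp A ξ v) := hb2
          have hc2' : ζ (GammaComp A ξ c) = ζ (GammaComp A ξ v) := hc2
          rw [hb2', hc2']
        rcases hadj with h1 | h1
        · exact hζ.2 ⟨⟨b, rfl⟩, ⟨c, rfl⟩, b, mem_gammaComp_self A ξ b, c,
            mem_gammaComp_self A ξ c, h1⟩ (fun h => hcb h.symm) hζbc
        · exact hζ.2 ⟨⟨c, rfl⟩, ⟨b, rfl⟩, c, mem_gammaComp_self A ξ c, b,
            mem_gammaComp_self A ξ b, h1⟩ hcb hζbc.symm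
  · intro hw
    rcases connIn_iff.mp hw with ⟨-, -, hrt⟩
    clear hw
    suffices h : w ∈ GammaComp A ξ v ∧
        ConnIn A {u : V | ζ (GammaComp A ξ u) = ζ (GammaComp A ξ v)} v w from h.2
    induction hrt with
    | refl => exact ⟨mem_gammaComp_self A ξ v, connIn_refl rfl⟩
    | @tail b c hab hbc ih =>
      rcases hbc with ⟨hb1, hc1, hadj⟩
      obtain ⟨hbΓ, hb2⟩ := ih
      have hcΓ : c ∈ GammaComp A ξ v := hbΓ.trans (connIn_single hb1 hc1 hadj)
      have hπb : GammaComp A ξ b = GammaComp A ξ v := gammaComp_eq_of_mem hbΓ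
      have hπc : GammaComp A ξ c = GammaComp A ξ v := gammaComp_eq_of_mem hcΓ
      refine ⟨hcΓ, hb2.trans (connIn_single ?_ ?_ hadj)⟩
      · show ζ (GammaComp A ξ b) = ζ (GammaComp A ξ v); rw [hπb]
      · show ζ (GammaComp A ξ c) = ζ (GammaComp A ξ v); rw [hπc]

end AuxQuot

theorem exists_E {V VR VS : Type} [Finite V] [Finite VR] [Finite VS]
    [Nonempty VR] [Nonempty VS]
    (A : V → V → Prop) (R : VR → VR → Prop) (S : VS → VS → Prop)
    (hcard : ∀ (V' : Type) [Finite V'] [Nonempty V'] (A' : V' → V' → Prop),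
      Nat.card (StrictHomSet A' R) ≤ Nat.card (StrictHomSet A' S))
    (𝒞 : Set (Set V)) :
    ∃ E : (Set V → VR) → (Set V → VS),
      (∀ f, IsStrictHom (qArc A 𝒞) R f → (∀ C ∉ 𝒞, f C = Classical.arbitrary VR) →
        IsStrictHom (qArc A 𝒞) S (E f) ∧ ∀ C ∉ 𝒞, E f C = Classical.arbitrary VS) ∧
      (∀ f g, IsStrictHom (qArc A 𝒞) R f → (∀ C ∉ 𝒞, f C = Classical.arbitrary VR) →
        IsStrictHom (qArc A 𝒞) R g → (∀ C ∉ 𝒞, g C = Classical.arbitrary VR) →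
        E f = E g → f = g) := by
  classical
  haveI : Finite (Set V) := Finite.of_equiv (V → Prop) (Equiv.refl _)
  by_cases hne : Nonempty {C : Set V // C ∈ 𝒞}
  · set V' := {C : Set V // C ∈ 𝒞} with hV'
    set A' : V' → V' → Prop := fun C D => ∃ a ∈ C.1, ∃ b ∈ D.1, A a b with hA'
    have hres : ∀ f : Set V → VR, IsStrictHom (qArc A 𝒞) R f →
        IsStrictHom A' R (fun D => f D.1) := by
      intro f hf
      constructor
      · rintro C D ⟨a, ha, b, hb, hab⟩
        exact hf.1 ⟨C.2, D.2, a, ha, b, hb, hab⟩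
      · rintro C D ⟨a, ha, b, hb, hab⟩ hnd
        exact hf.2 ⟨C.2, D.2, a, ha, b, hb, hab⟩ (fun h => hnd (Subtype.ext h))
    haveI hfR : Finite (StrictHomSet A' R) := Subtype.finite
    haveI hfS : Finite (StrictHomSet A' S) := Subtype.finite
    haveI : Fintype (StrictHomSet A' R) := Fintype.ofFinite _
    haveI : Fintype (StrictHomSet A' S) := Fintype.ofFinite _
    have hle : Fintype.card (StrictHomSet A' R) ≤ Fintype.card (StrictHomSet A' S) := by
      have := hcard V' A'
      simpa [Nat.card_eq_fintype_card] using this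
    obtain ⟨e⟩ := Function.Embedding.nonempty_of_card_le hle
    refine ⟨fun f =>
      if hf : IsStrictHom (qArc A 𝒞) R f ∧ ∀ C ∉ 𝒞, f C = Classical.arbitrary VR then
        fun C => if hC : C ∈ 𝒞 then (e ⟨fun D => f D.1, hres f hf.1⟩).1 ⟨C, hC⟩
          else Classical.arbitrary VS
      else fun _ => Classical.arbitrary VS, ?_, ?_⟩
    · intro f hf1 hf2
      dsimp only
      rw [dif_pos ⟨hf1, hf2⟩]
      refine ⟨⟨?_, ?_⟩, ?_⟩
      · rintro C D ⟨hC, hD, a, ha, b, hb, hab⟩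
        dsimp only
        rw [dif_pos hC, dif_pos hD]
        exact (e ⟨fun D => f D.1, hres f hf1⟩).2.1 ⟨a, ha, b, hb, hab⟩
      · rintro C D ⟨hC, hD, a, ha, b, hb, hab⟩ hnd
        dsimp only
        rw [dif_pos hC, dif_pos hD]
        exact (e ⟨fun D => f D.1, hres f hf1⟩).2.2 ⟨a, ha, b, hb, hab⟩
          (fun h => hnd (congrArg Subtype.val h))
      · intro C hC
        rw [dif_neg hC]
    · intro f g hf1 hf2 hg1 hg2 hEq
      dsimp only at hEq
      rw [dif_pos ⟨hf1, hf2⟩, dif_pos ⟨hg1, hg2⟩] at hEq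
      have he : e ⟨fun D => f D.1, hres f hf1⟩ = e ⟨fun D => g D.1, hres g hg1⟩ := by
        apply Subtype.ext
        funext D
        have := congrFun hEq D.1
        rwa [dif_pos D.2, dif_pos D.2] at this
      have hfg := e.injective he
      funext C
      by_cases hC : C ∈ 𝒞
      · exact congrFun (congrArg Subtype.val hfg) ⟨C, hC⟩
      · rw [hf2 C hC, hg2 C hC]
  · have hall : ∀ C : Set V, C ∉ 𝒞 := fun C hC => hne ⟨⟨C, hC⟩⟩
    refine ⟨fun _ _ => Classical.arbitrary VS, ?_, ?_⟩
    · intro f _ _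
      refine ⟨⟨?_, ?_⟩, fun _ _ => rfl⟩
      · rintro C D ⟨hC, -⟩
        exact absurd hC (hall C)
      · rintro C D ⟨hC, -⟩
        exact absurd hC (hall C)
    · intro f g _ hf2 _ hg2 _
      funext C
      rw [hf2 C (hall C), hg2 C (hall C)]

/-- For finite digraphs `R`, `S`: `R ⊑_Γ S` with respect to the class of all
finite digraphs iff `#S(G,R) ≤ #S(G,S)` for every finite digraph `G`. -/
theorem stmt9 {VR : Type} [Finite VR] [Nonempty VR] (R : VR → VR → Prop)
    {VS : Type} [Finite VS] [Nonempty VS] (S : VS → VS → Prop) :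
    SqGamma (fun _ _ => True) R S ↔
      ∀ (V : Type) [Finite V] [Nonempty V] (A : V → V → Prop),
        Nat.card (StrictHomSet A R) ≤ Nat.card (StrictHomSet A S) := by
  constructor
  · intro hsq V _ _ A
    haveI : Finite (StrictHomSet A S) := Subtype.finite
    obtain ⟨ρ, hρinj, hρΓ⟩ := hsq V A trivial
    have key : ∀ ξ : StrictHomSet A R, IsStrictHom A S (ρ ⟨ξ.1, ξ.2.1⟩).1 := by
      intro ξ
      apply isStrictHom_of_gammaComp (ρ ⟨ξ.1, ξ.2.1⟩).2
      intro v
      rw [hρΓ ⟨ξ.1, ξ.2.1⟩ v]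
      exact gammaComp_eq_singleton ξ.2 v
    have hFinj : Function.Injective
        (fun ξ : StrictHomSet A R => (⟨(ρ ⟨ξ.1, ξ.2.1⟩).1, key ξ⟩ : StrictHomSet A S)) := by
      intro ξ1 ξ2 h
      dsimp only at h
      have h1 := congrArg Subtype.val h
      have h3 := hρinj (Subtype.ext h1)
      have h4 := congrArg Subtype.val h3
      exact Subtype.ext h4
    exact Nat.card_le_card_of_injective _ hFinj
  · intro hcard V _ _ A _
    haveI : Finite (Set V) := Finite.of_equiv (V → Prop) (Equiv.refl _)
    obtain ⟨E, hE⟩ := Classical.axiomOfChoice (exists_E A R S hcard)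
    have hEa := fun 𝒞 => (hE 𝒞).1
    have hEb := fun 𝒞 => (hE 𝒞).2
    have hP1 : ∀ ξ : HomSet A R, IsStrictHom (qArc A (Comps A ξ.1)) R (barMap A ξ.1) :=
      fun ξ => barMap_strict ξ.2
    have hP2 : ∀ ξ : HomSet A R, ∀ C ∉ Comps A ξ.1, barMap A ξ.1 C = Classical.arbitrary VR :=
      fun ξ C hC => barMap_off hC
    have hζ : ∀ ξ : HomSet A R,
        IsStrictHom (qArc A (Comps A ξ.1)) S (E (Comps A ξ.1) (barMap A ξ.1)) ∧
          ∀ C ∉ Comps A ξ.1, E (Comps A ξ.1) (barMap A ξ.1) C = Classical.arbitrary VS :=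
      fun ξ => hEa (Comps A ξ.1) (barMap A ξ.1) (hP1 ξ) (hP2 ξ)
    refine ⟨fun ξ => ⟨fun v => E (Comps A ξ.1) (barMap A ξ.1) (GammaComp A ξ.1 v), ?_⟩,
      ?_, ?_⟩
    · intro v w hvw
      exact (hζ _).1.1 ⟨⟨v, rfl⟩, ⟨w, rfl⟩, v, mem_gammaComp_self A ξ.1 v,
        w, mem_gammaComp_self A ξ.1 w, hvw⟩
    · intro ξ1 ξ2 heq
      have hfun := congrArg Subtype.val heq
      simp only at hfun
      have hΓ : ∀ v, GammaComp A ξ1.1 v = GammaComp A ξ2.1 v := by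
        intro v
        rw [← gammaComp_comp (hζ ξ1).1 v, ← gammaComp_comp (hζ ξ2).1 v, hfun]
      have h𝒞 : Comps A ξ1.1 = Comps A ξ2.1 := by
        ext C
        constructor
        · rintro ⟨v, rfl⟩; exact ⟨v, hΓ v⟩
        · rintro ⟨v, rfl⟩; exact ⟨v, (hΓ v).symm⟩
      have hg1 : IsStrictHom (qArc A (Comps A ξ1.1)) R (barMap A ξ2.1) := by
        rw [h𝒞]; exact hP1 ξ2
      have hg2 : ∀ C ∉ Comps A ξ1.1, barMap A ξ2.1 C = Classical.arbitrary VR := by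
        rw [h𝒞]; exact hP2 ξ2
      have hEq : E (Comps A ξ1.1) (barMap A ξ1.1) = E (Comps A ξ1.1) (barMap A ξ2.1) := by
        funext C
        by_cases hC : C ∈ Comps A ξ1.1
        · obtain ⟨v, rfl⟩ := hC
          have step1 : E (Comps A ξ1.1) (barMap A ξ1.1) (GammaComp A ξ1.1 v)
              = E (Comps A ξ2.1) (barMap A ξ2.1) (GammaComp A ξ2.1 v) := congrFun hfun v
          rw [step1, h𝒞, hΓ v]
        · rw [(hζ ξ1).2 C hC,
            (hEa (Comps A ξ1.1) (barMap A ξ2.1) hg1 hg2).2 C hC]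
      have hbar : barMap A ξ1.1 = barMap A ξ2.1 :=
        hEb (Comps A ξ1.1) (barMap A ξ1.1) (barMap A ξ2.1) (hP1 ξ1) (hP2 ξ1) hg1 hg2 hEq
      apply Subtype.ext
      funext v
      calc ξ1.1 v = barMap A ξ1.1 (GammaComp A ξ1.1 v) := (barMap_pi v).symm
        _ = barMap A ξ2.1 (GammaComp A ξ1.1 v) := congrFun hbar _
        _ = barMap A ξ2.1 (GammaComp A ξ2.1 v) := by rw [hΓ v]
        _ = ξ2.1 v := barMap_pi v
    · intro ξ v
      exact gammaComp_comp (hζ ξ).1 v
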